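/- Let U be a finite set of unit vectors in ℝ² with pos(U) = ℝ², and let u ∈ U be such that no two vectors v, w ∈ U satisfy pos{u, v, w} = ℝ². Then for every subset {x, y, z} ⊆ U \ {u} with pos{u, x, y, z} = ℝ², one has −u ∈ {x, y, z}. -/

import Mathlib

open RealInnerProductSpace

noncomputable section

abbrev V2 : Type := EuclideanSpace ℝ (Fin 2)

/-- The positive hull: all nonnegative linear combinations of elements of `M`. -/
def pos {E : Type*} [AddCommMonoid E] [Module ℝ E] (M : Set E) : Set E :=
  {x | ∃ (s : Finset E) (c : E → ℝ),
    (↑s : Set E) ⊆ M ∧ (∀ v, 0 ≤ c v) ∧ x = ∑ v ∈ s, c v • v}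

/-- 2D cross product. -/
def cr (a b : V2) : ℝ := a 0 * b 1 - a 1 * b 0

/-- `cr n` as a linear map. -/
def crL (n : V2) : V2 →ₗ[ℝ] ℝ where
  toFun t := cr n t
  map_add' a b := by simp [cr]; ring
  map_smul' c a := by simp [cr]; ring

lemma cr_antisymm (a b : V2) : cr a b = -cr b a := by simp [cr]; ring

lemma cr_self (a : V2) : cr a a = 0 := by simp [cr]; ring

/-- Plücker relation. -/
lemma pl4 (a b c d : V2) : cr a b * cr c d + cr b c * cr a d + cr c a * cr b d = 0 := by
  simp [cr]; ring

/-- rotation by 90 degrees -/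
def J (v : V2) : V2 := (WithLp.equiv 2 (Fin 2 → ℝ)).symm ![-(v 1), v 0]

lemma cr_J (v : V2) : cr v (J v) = v 0 ^ 2 + v 1 ^ 2 := by simp [cr, J]; ring

lemma cr_of_mem_pos {M : Set V2} {n t : V2} (h : ∀ g ∈ M, cr n g ≤ 0)
    (ht : t ∈ pos M) : cr n t ≤ 0 := by
  obtain ⟨s, c, hs, hc, rfl⟩ := ht
  have heq : cr n (∑ v ∈ s, c v • v) = ∑ v ∈ s, c v * cr n v := by
    show crL n (∑ v ∈ s, c v • v) = _
    rw [map_sum]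
    refine Finset.sum_congr rfl fun v _ => ?_
    show cr n (c v • v) = c v * cr n v
    simp [cr]
    ring
  rw [heq]
  refine Finset.sum_nonpos fun v hv => ?_
  have h1 := h v (hs hv)
  have h2 := hc v
  nlinarith

lemma mem_pos_pair {M : Set V2} {p q : V2} (hp : p ∈ M) (hq : q ∈ M) (hne : p ≠ q)
    {a b : ℝ} (ha : 0 ≤ a) (hb : 0 ≤ b) : a • p + b • q ∈ pos M := by
  classical
  refine ⟨{p, q}, fun r => if r = p then a else if r = q then b else 0, ?_, ?_, ?_⟩
  · intro r hr
    simp only [Finset.coe_insert, Finset.coe_singleton, Set.mem_insert_iff,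
      Set.mem_singleton_iff] at hr
    rcases hr with rfl | rfl <;> assumption
  · intro v
    by_cases h1 : v = p
    · simp [h1, ha]
    · by_cases h2 : v = q <;> simp [h1, h2, Ne.symm hne, ha, hb]
  · rw [Finset.sum_pair hne]
    simp [Ne.symm hne]

lemma pair_step {M : Set V2} {p q : V2} (hp : p ∈ M) (hq : q ∈ M) (hpq : 0 < cr p q)
    {t : V2} (h1 : 0 ≤ cr p t) (h2 : cr q t ≤ 0) : t ∈ pos M := by
  have hne : p ≠ q := by
    rintro rfl
    rw [cr_self] at hpq; exact lt_irrefl 0 hpq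
  have h0 : cr p q ≠ 0 := ne_of_gt hpq
  have hs : cr p q • t = (-cr q t) • p + (cr p t) • q := by
    have e0 : (cr p q • t) 0 = ((-cr q t) • p + (cr p t) • q) 0 := by
      simp only [PiLp.add_apply, PiLp.smul_apply, smul_eq_mul, cr]; ring
    have e1 : (cr p q • t) 1 = ((-cr q t) • p + (cr p t) • q) 1 := by
      simp only [PiLp.add_apply, PiLp.smul_apply, smul_eq_mul, cr]; ring
    ext i
    fin_cases i <;> assumption
  have ht : t = ((-cr q t) / cr p q) • p + (cr p t / cr p q) • q := by
    calc t = (cr p q)⁻¹ • (cr p q • t) := by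
            rw [smul_smul, inv_mul_cancel₀ h0, one_smul]
      _ = (cr p q)⁻¹ • ((-cr q t) • p + (cr p t) • q) := by rw [hs]
      _ = ((-cr q t) / cr p q) • p + (cr p t / cr p q) • q := by
            rw [smul_add, smul_smul, smul_smul]
            simp [div_eq_inv_mul]
  rw [ht]
  exact mem_pos_pair hp hq hne (div_nonneg (by linarith) hpq.le)
    (div_nonneg h1 hpq.le)

/-- Three vectors positively oriented pairwise span the plane. -/
lemma span_triple {a b c : V2} (hab : 0 < cr a b) (hbc : 0 < cr b c) (hca : 0 < cr c a) :
    pos {a, b, c} = Set.univ := by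
  have ha : a ∈ ({a, b, c} : Set V2) := by simp
  have hb : b ∈ ({a, b, c} : Set V2) := by simp
  have hc : c ∈ ({a, b, c} : Set V2) := by simp
  ext t
  simp only [Set.mem_univ, iff_true]
  have pl := pl4 a b c t
  rcases le_or_gt (cr b t) 0 with h | h
  · rcases le_or_gt 0 (cr a t) with h' | h'
    · exact pair_step ha hb hab h' h
    · -- cr a t < 0, cr b t ≤ 0 ⇒ cr c t ≥ 0, use pair (c, a)
      have hct : 0 ≤ cr c t := by nlinarith
      exact pair_step hc ha hca hct h'.le
  · rcases le_or_gt (cr c t) 0 with h'' | h''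
    · exact pair_step hb hc hbc h.le h''
    · have hat : cr a t ≤ 0 := by nlinarith
      exact pair_step hc ha hca h''.le hat

/-- finite max for a total transitive relation -/
lemma finset_max {α : Type*} {Q : α → Prop} {R : α → α → Prop}
    (hrefl : ∀ a, Q a → R a a)
    (htot : ∀ a b, Q a → Q b → R a b ∨ R b a)
    (htrans : ∀ a b c, Q a → Q b → Q c → R a b → R b c → R a c) :
    ∀ s : Finset α, s.Nonempty → (∀ a ∈ s, Q a) → ∃ m ∈ s, ∀ a ∈ s, R a m := by
  classical
  intro s
  induction s using Finset.induction_on with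
  | empty => intro h; exact absurd h (by simp)
  | insert a t hat ih =>
    intro _ hQ
    rcases t.eq_empty_or_nonempty with rfl | htne
    · exact ⟨a, by simp, by
        intro b hb
        simp only [Finset.mem_insert, Finset.notMem_empty, or_false] at hb
        subst hb
        exact hrefl _ (hQ _ (by simp))⟩
    · obtain ⟨m, hm, hmax⟩ := ih htne (fun b hb => hQ b (by simp [hb]))
      have hQa : Q a := hQ a (by simp)
      have hQm : Q m := hQ m (by simp [hm])
      rcases htot a m hQa hQm with hle | hle
      · exact ⟨m, by simp [hm], by
          intro b hb
          rcases Finset.mem_insert.mp hb with rfl | hb'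
          · exact hle
          · exact hmax b hb'⟩
      · refine ⟨a, by simp, ?_⟩
        intro b hb
        rcases Finset.mem_insert.mp hb with rfl | hb'
        · exact hrefl b hQa
        · exact htrans b m a (hQ b (by simp [hb'])) hQm hQa (hmax b hb') hle

lemma unit_coords {v : V2} (h : ‖v‖ = 1) : v 0 ^ 2 + v 1 ^ 2 = 1 := by
  rw [EuclideanSpace.norm_eq] at h
  have := Real.sqrt_eq_one.mp h
  simpa [Fin.sum_univ_two, Real.norm_eq_abs, sq_abs] using this

/-- unit vectors with zero cross product are equal or opposite -/
lemma eq_or_neg_of_cr_zero {u s : V2} (hu : u 0 ^ 2 + u 1 ^ 2 = 1)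
    (hs : s 0 ^ 2 + s 1 ^ 2 = 1) (h : cr u s = 0) : s = u ∨ s = -u := by
  simp only [cr] at h
  have hd : (u 0 * s 0 + u 1 * s 1) ^ 2 = 1 := by nlinarith
  have hd2 : (u 0 * s 0 + u 1 * s 1 - 1) * (u 0 * s 0 + u 1 * s 1 + 1) = 0 := by nlinarith
  rcases mul_eq_zero.mp hd2 with h1 | h1
  · left
    ext i; fin_cases i
    · show s 0 = u 0; nlinarith [sq_nonneg (s 0 - u 0), sq_nonneg (s 1 - u 1)]
    · show s 1 = u 1; nlinarith [sq_nonneg (s 0 - u 0), sq_nonneg (s 1 - u 1)]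
  · right
    ext i; fin_cases i
    · show s 0 = (-u) 0
      have : (-u) 0 = -(u 0) := rfl
      rw [this]
      nlinarith [sq_nonneg (s 0 + u 0), sq_nonneg (s 1 + u 1)]
    · show s 1 = (-u) 1
      have : (-u) 1 = -(u 1) := rfl
      rw [this]
      nlinarith [sq_nonneg (s 0 + u 0), sq_nonneg (s 1 + u 1)]

/-- If no two vectors of `U` form with `u` a positively spanning triple, then every
`{x,y,z} ⊆ U \ {u}` with `pos {u,x,y,z} = ℝ²` contains `-u`. -/
theorem stmt2 (U : Set V2) (hfin : U.Finite) (hunit : ∀ v ∈ U, ‖v‖ = 1)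
    (hpos : pos U = Set.univ) (u : V2) (hu : u ∈ U)
    (hsq : ¬ ∃ v ∈ U, ∃ w ∈ U, pos {u, v, w} = Set.univ) :
    ∀ x ∈ U, ∀ y ∈ U, ∀ z ∈ U, x ≠ u → y ≠ u → z ≠ u →
      pos {u, x, y, z} = Set.univ → (-u = x ∨ -u = y ∨ -u = z) := by
  classical
  intro x hx y hy z hz hxu hyu hzu hspan
  by_contra hneg
  push_neg at hneg
  obtain ⟨hnx, hny, hnz⟩ := hneg
  have hmemU : ∀ s, s = x ∨ s = y ∨ s = z → s ∈ U := by
    rintro s (rfl | rfl | rfl) <;> assumption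
  have hsneu : ∀ s, s = x ∨ s = y ∨ s = z → s ≠ u := by
    rintro s (rfl | rfl | rfl) <;> assumption
  have hsnenu : ∀ s, s = x ∨ s = y ∨ s = z → s ≠ -u := by
    rintro s (rfl | rfl | rfl) <;> [exact fun h => hnx h.symm;
      exact fun h => hny h.symm; exact fun h => hnz h.symm]
  have nrmu : u 0 ^ 2 + u 1 ^ 2 = 1 := unit_coords (hunit u hu)
  have hcr : ∀ s, s = x ∨ s = y ∨ s = z → cr u s ≠ 0 := by
    intro s hs h0
    rcases eq_or_neg_of_cr_zero nrmu (unit_coords (hunit s (hmemU s hs))) h0 with h | h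
    · exact hsneu s hs h
    · exact hsnenu s hs h
  -- generators of the positive hull
  have hgen : ∀ g ∈ ({u, x, y, z} : Set V2), g = u ∨ (g = x ∨ g = y ∨ g = z) := by
    intro g hg
    simp only [Set.mem_insert_iff, Set.mem_singleton_iff] at hg
    tauto
  -- P (upper half-plane elements of {x,y,z}) is nonempty
  have hPne : ∃ s, (s = x ∨ s = y ∨ s = z) ∧ 0 < cr u s := by
    by_contra hP
    push_neg at hP
    have hall : ∀ g ∈ ({u, x, y, z} : Set V2), cr u g ≤ 0 := by
      intro g hg
      rcases hgen g hg with rfl | hg'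
      · rw [cr_self]
      · exact hP g hg'
    have hle := cr_of_mem_pos hall (t := J u) (by rw [hspan]; trivial)
    rw [cr_J] at hle
    linarith
  obtain ⟨v0, hv0mem, hv0⟩ := hPne
  -- the Finset of elements of {x,y,z} in the open upper half-plane determined by u
  set P : Finset V2 := ({x, y, z} : Finset V2).filter (fun s => 0 < cr u s) with hPdef
  have hPmem : ∀ s, s ∈ P ↔ (s = x ∨ s = y ∨ s = z) ∧ 0 < cr u s := by
    intro s
    simp [hPdef, Finset.mem_filter, Finset.mem_insert, Finset.mem_singleton]
  -- maximal element of P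
  obtain ⟨m, hmP, hmax⟩ :=
    finset_max (Q := fun s : V2 => 0 < cr u s) (R := fun a b => cr b a ≤ 0)
      (fun a _ => by show cr a a ≤ 0; rw [cr_self])
      (fun a b _ _ => by
        show cr b a ≤ 0 ∨ cr a b ≤ 0
        have h := cr_antisymm a b
        rcases le_total (cr a b) 0 with h' | h' <;> [right; left] <;> linarith)
      (fun a b c hQa hQb hQc hab hbc => by
        show cr c a ≤ 0
        have hab' : cr b a ≤ 0 := hab
        have hbc' : cr c b ≤ 0 := hbc
        have hQa' : 0 < cr u a := hQa
        have hQb' : 0 < cr u b := hQb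
        have hQc' : 0 < cr u c := hQc
        have pl := pl4 c b a u
        have h1 : cr a u < 0 := by have := cr_antisymm a u; linarith
        have h2 : cr b u < 0 := by have := cr_antisymm b u; linarith
        have h3 : cr c u < 0 := by have := cr_antisymm c u; linarith
        have h4 : cr a c = -cr c a := by rw [cr_antisymm]
        nlinarith [mul_nonneg (neg_nonneg.mpr hbc') (neg_nonneg.mpr h1.le),
          mul_nonneg (neg_nonneg.mpr hab') (neg_nonneg.mpr h3.le)])
      P ⟨v0, (hPmem v0).mpr ⟨hv0mem, hv0⟩⟩ (fun a ha => ((hPmem a).mp ha).2)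
  obtain ⟨hmxyz, hum⟩ := (hPmem m).mp hmP
  have hmU : m ∈ U := hmemU m hmxyz
  -- key: for every s in the lower half-plane, cr m s ≤ 0
  have key : ∀ s, (s = x ∨ s = y ∨ s = z) → cr u s < 0 → cr m s ≤ 0 := by
    intro s hs hneg'
    by_contra hpos'
    push_neg at hpos'
    have hsu : 0 < cr s u := by have := cr_antisymm s u; linarith
    exact hsq ⟨m, hmU, s, hmemU s hs, span_triple hum hpos' hsu⟩
  -- every generator is in the closed half-plane cr m · ≤ 0
  have hall : ∀ g ∈ ({u, x, y, z} : Set V2), cr m g ≤ 0 := by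
    intro g hg
    rcases hgen g hg with rfl | hg'
    · have := cr_antisymm m g; linarith
    · rcases lt_trichotomy (cr u g) 0 with h | h | h
      · exact key g hg' h
      · exact absurd h (hcr g hg')
      · exact hmax g ((hPmem g).mpr ⟨hg', h⟩)
  have hle := cr_of_mem_pos hall (t := J m) (by rw [hspan]; trivial)
  rw [cr_J] at hle
  have := unit_coords (hunit m hmU)
  linarith
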